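/- arXiv:2004.02812 — 3 statements merged into one kernel-verified Lean document; each statement's English description precedes it below -/
import Mathlib

section
/- Let k_1, …, k_n be positive integers with sum k = k_1 + ⋯ + k_n, let d_1 < ⋯ < d_m be the distinct values among k_1, …, k_n, and let p_1, …, p_m be their multiplicities. For any finpartition P of (Finset.univ : Finset (Fin k)) whose multiset of part cardinalities equals {k_1, …, k_n}, the stabilizer of P in Equiv.Perm (Fin k) (for the action by taking images of blocks) is a finite group of cardinality k_1! ⋯ k_n! · p_1! ⋯ p_m!. -/
/-- The action of a permutation `σ` of `Fin k` on a finpartition of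
`Finset.univ : Finset (Fin k)`, taking each block `B` to `Finset.image σ B`. -/
def finpartitionPermSmul {k : ℕ} (σ : Equiv.Perm (Fin k))
    (P : Finpartition (Finset.univ : Finset (Fin k))) :
    Finpartition (Finset.univ : Finset (Fin k)) where
  parts := P.parts.image fun B => B.image σ
  supIndep := by
    rw [Finset.supIndep_iff_pairwiseDisjoint]
    rintro a ha b hb hab
    simp only [Finset.coe_image, Set.mem_image, Finset.mem_coe] at ha hb
    obtain ⟨A, hA, rfl⟩ := ha
    obtain ⟨B, hB, rfl⟩ := hb
    have hAB : A ≠ B := fun h => hab (by rw [h])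
    exact (Finset.disjoint_image σ.injective).mpr
      (P.disjoint (Finset.mem_coe.mpr hA) (Finset.mem_coe.mpr hB) hAB)
  sup_parts := by
    ext x
    simp only [Finset.mem_sup, Finset.mem_univ, iff_true]
    obtain ⟨A, hA, hx⟩ := P.exists_mem (a := σ⁻¹ x) (Finset.mem_univ _)
    exact ⟨A.image σ, Finset.mem_image_of_mem _ hA,
      Finset.mem_image.mpr ⟨σ⁻¹ x, hx, by simp⟩⟩
  bot_notMem := by
    simp only [Finset.bot_eq_empty, Finset.mem_image, not_exists, not_and]
    intro A hA h
    exact P.bot_notMem (by simpa [Finset.image_eq_empty.mp h] using hA)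

/-- Permutations of `Fin k` act on finpartitions of `Finset.univ : Finset (Fin k)`
by taking images of blocks. -/
instance finpartitionPermAction {k : ℕ} :
    MulAction (Equiv.Perm (Fin k)) (Finpartition (Finset.univ : Finset (Fin k))) where
  smul := finpartitionPermSmul
  one_smul P := by
    apply Finpartition.ext
    show (P.parts.image fun B => B.image (1 : Equiv.Perm (Fin k))) = P.parts
    simp
  mul_smul σ τ P := by
    apply Finpartition.ext
    show (P.parts.image fun B => B.image (σ * τ))
        = ((P.parts.image fun B => B.image τ).image fun B => B.image σ)
    rw [Finset.image_image]
    simp [Finset.image_image, Function.comp_def]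

section Aux


open Finset Equiv

variable {k : ℕ} {P : Finpartition (Finset.univ : Finset (Fin k))}

lemma smul_parts (σ : Equiv.Perm (Fin k)) :
    (σ • P).parts = P.parts.image fun B => B.image σ := rfl

lemma mem_stab_iff {σ : Equiv.Perm (Fin k)} :
    σ ∈ MulAction.stabilizer (Equiv.Perm (Fin k)) P ↔
      ∀ B ∈ P.parts, B.image σ ∈ P.parts := by
  rw [MulAction.mem_stabilizer_iff]
  constructor
  · intro h B hB
    have : B.image σ ∈ (σ • P).parts := by
      rw [smul_parts]; exact Finset.mem_image_of_mem _ hB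
    rwa [h] at this
  · intro h
    apply Finpartition.ext
    rw [smul_parts]
    apply Finset.eq_of_subset_of_card_le
    · intro B hB
      obtain ⟨A, hA, rfl⟩ := Finset.mem_image.mp hB
      exact h A hA
    · rw [Finset.card_image_of_injective _ (Finset.image_injective σ.injective)]

/-- Permutations preserving the fibers of `f` are a product of permutations of fibers. -/
def fiberPermEquiv {α ι : Type*} (f : α → ι) :
    {π : Equiv.Perm α // ∀ a, f (π a) = f a} ≃ ∀ i, Equiv.Perm {a // f a = i} where
  toFun π i := Equiv.Perm.subtypePerm π.1 fun a => by rw [π.2 a]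
  invFun g := ⟨(Equiv.sigmaFiberEquiv f).symm.trans
      ((Equiv.sigmaCongrRight g).trans (Equiv.sigmaFiberEquiv f)),
    fun a => (g (f a) ⟨a, rfl⟩).2⟩
  left_inv π := Subtype.ext (Equiv.ext fun a => rfl)
  right_inv g := by
    funext i
    refine Equiv.ext fun x => ?_
    obtain ⟨a, ha⟩ := x
    subst ha
    rfl

lemma card_fiberPerm {α ι : Type*} [Fintype α] [DecidableEq α] [Fintype ι] [DecidableEq ι]
    (f : α → ι) :
    Nat.card {π : Equiv.Perm α // ∀ a, f (π a) = f a}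
      = ∏ i : ι, Nat.factorial (Fintype.card {a // f a = i}) := by
  rw [Nat.card_congr (fiberPermEquiv f), Nat.card_pi]
  refine Finset.prod_congr rfl fun i _ => ?_
  rw [Nat.card_eq_fintype_card, Fintype.card_perm]

end Aux

section Stab

open Finset Equiv

variable {k : ℕ} (P : Finpartition (Finset.univ : Finset (Fin k)))

/-- The part containing `a`, as an element of the subtype of parts. -/
def fpart (a : Fin k) : {B // B ∈ P.parts} :=
  ⟨P.part a, P.part_mem.mpr (Finset.mem_univ a)⟩

lemma fpart_eq_iff {a : Fin k} {B : {B // B ∈ P.parts}} :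
    fpart P a = B ↔ a ∈ B.1 := by
  constructor
  · rintro rfl
    exact P.mem_part (Finset.mem_univ a)
  · intro h
    exact Subtype.ext (P.part_eq_of_mem B.2 h)

noncomputable def stabPerm (σ : MulAction.stabilizer (Equiv.Perm (Fin k)) P) :
    Equiv.Perm {B // B ∈ P.parts} :=
  Equiv.ofBijective
    (fun B => ⟨B.1.image σ.1, mem_stab_iff.mp σ.2 B.1 B.2⟩)
    (Finite.injective_iff_bijective.mp fun A B h =>
      Subtype.ext (Finset.image_injective σ.1.injective (congrArg Subtype.val h)))

@[simp] lemma stabPerm_apply (σ : MulAction.stabilizer (Equiv.Perm (Fin k)) P)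
    (B : {B // B ∈ P.parts}) : (stabPerm P σ B).1 = B.1.image σ.1 := rfl

noncomputable def stabHom :
    MulAction.stabilizer (Equiv.Perm (Fin k)) P →* Equiv.Perm {B // B ∈ P.parts} where
  toFun := stabPerm P
  map_one' := Equiv.ext fun B => Subtype.ext (by simp)
  map_mul' σ τ := Equiv.ext fun B => Subtype.ext (by
    simp [Finset.image_image])

lemma part_image_eq {σ : Equiv.Perm (Fin k)} (h : ∀ a, P.part (σ a) = P.part a)
    {B : Finset (Fin k)} (hB : B ∈ P.parts) : B.image σ = B := by
  apply Finset.eq_of_subset_of_card_le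
  · intro y hy
    obtain ⟨x, hx, rfl⟩ := Finset.mem_image.mp hy
    have hpx : P.part x = B := P.part_eq_of_mem hB hx
    have hm : σ x ∈ P.part (σ x) := P.mem_part (Finset.mem_univ _)
    rwa [h x, hpx] at hm
  · rw [Finset.card_image_of_injective _ σ.injective]

lemma mem_ker_iff {σ : MulAction.stabilizer (Equiv.Perm (Fin k)) P} :
    σ ∈ (stabHom P).ker ↔ ∀ a, fpart P (σ.1 a) = fpart P a := by
  rw [MonoidHom.mem_ker]
  constructor
  · intro h a
    rw [fpart_eq_iff]
    show σ.1 a ∈ P.part a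
    have h1 : (stabHom P σ) (fpart P a) = fpart P a := by rw [h]; rfl
    have h2 : (P.part a).image σ.1 = P.part a := congrArg Subtype.val h1
    rw [← h2]
    exact Finset.mem_image_of_mem _ (P.mem_part (Finset.mem_univ a))
  · intro h
    refine Equiv.ext fun B => Subtype.ext ?_
    show B.1.image σ.1 = B.1
    exact part_image_eq P (fun a => congrArg Subtype.val (h a)) B.2

noncomputable def kerEquiv : (stabHom P).ker ≃
    {σ : Equiv.Perm (Fin k) // ∀ a, fpart P (σ a) = fpart P a} where
  toFun x := ⟨x.1.1, (mem_ker_iff P).mp x.2⟩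
  invFun y := ⟨⟨y.1, mem_stab_iff.mpr fun B hB => by
      rw [part_image_eq P (fun a => congrArg Subtype.val (y.2 a)) hB]; exact hB⟩,
    (mem_ker_iff P).mpr y.2⟩
  left_inv x := Subtype.ext (Subtype.ext rfl)
  right_inv y := Subtype.ext rfl

end Stab

section Range

open Finset Equiv

variable {k : ℕ} (P : Finpartition (Finset.univ : Finset (Fin k)))

/-- `Fin k` as a sigma over the parts. -/
def partSigma : Fin k ≃ Σ B : {B // B ∈ P.parts}, {x // x ∈ B.1} :=
  (Equiv.subtypeUnivEquiv fun x => Finset.mem_univ x).symm.trans P.equivSigmaParts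

lemma mem_range_iff {π : Equiv.Perm {B // B ∈ P.parts}} :
    π ∈ (stabHom P).range ↔ ∀ B, (π B).1.card = B.1.card := by
  constructor
  · rintro ⟨σ, rfl⟩ B
    show (B.1.image σ.1.1).card = B.1.card
    exact Finset.card_image_of_injective _ σ.1.injective
  · intro hπ
    classical
    let F : ∀ B : {B // B ∈ P.parts}, {x // x ∈ B.1} ≃ {x // x ∈ (π B).1} :=
      fun B => Finset.equivOfCardEq (hπ B).symm
    let σ : Equiv.Perm (Fin k) :=
      (partSigma P).trans ((Equiv.sigmaCongr π F).trans (partSigma P).symm)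
    have hσ : ∀ x : Fin k, σ x = (F (fpart P x) ⟨x, P.mem_part (Finset.mem_univ x)⟩).1 :=
      fun x => rfl
    have key : ∀ B : {B // B ∈ P.parts}, B.1.image σ = (π B).1 := by
      intro B
      apply Finset.eq_of_subset_of_card_le
      · intro y hy
        obtain ⟨x, hx, rfl⟩ := Finset.mem_image.mp hy
        have hB : fpart P x = B := (fpart_eq_iff P).mpr hx
        rw [hσ x, ← hB]
        exact (F (fpart P x) _).2
      · rw [Finset.card_image_of_injective _ σ.injective, hπ B]
    refine ⟨⟨σ, mem_stab_iff.mpr fun B hB => ?_⟩, ?_⟩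
    · rw [key ⟨B, hB⟩]; exact (π ⟨B, hB⟩).2
    · exact Equiv.ext fun B => Subtype.ext (key B)

end Range

/-- For positive integers `k_1, …, k_n` with sum `k`, with distinct values
`d_1 < ⋯ < d_m` occurring with multiplicities `p_1, …, p_m`, and any finpartition
`P` of `Finset.univ : Finset (Fin k)` whose multiset of part cardinalities is
`{k_1, …, k_n}`, the stabilizer of `P` under the action of `Equiv.Perm (Fin k)`
by taking images of blocks is a finite group of cardinality
`k_1! ⋯ k_n! ⋅ p_1! ⋯ p_m!`. -/
theorem card_stabilizer_finpartition
    (n k : ℕ) (c : Fin n → ℕ) (hc : ∀ i, 0 < c i) (hk : ∑ i, c i = k)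
    (P : Finpartition (Finset.univ : Finset (Fin k)))
    (hP : Multiset.map Finset.card P.parts.val = Multiset.map c Finset.univ.val) :
    Finite (MulAction.stabilizer (Equiv.Perm (Fin k)) P) ∧
    Nat.card (MulAction.stabilizer (Equiv.Perm (Fin k)) P) =
      (∏ i, Nat.factorial (c i)) *
        ∏ d ∈ Finset.image c Finset.univ,
          Nat.factorial (Finset.univ.filter fun i => c i = d).card := by
  classical
  refine ⟨Subtype.finite, ?_⟩
  have h1 : Nat.card (MulAction.stabilizer (Equiv.Perm (Fin k)) P)
      = Nat.card (stabHom P).range * Nat.card (stabHom P).ker := by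
    rw [Subgroup.card_eq_card_quotient_mul_card_subgroup (stabHom P).ker,
      Nat.card_congr (QuotientGroup.quotientKerEquivRange (stabHom P)).toEquiv]
  -- kernel cardinality
  have hker : Nat.card (stabHom P).ker = ∏ i, Nat.factorial (c i) := by
    rw [Nat.card_congr (kerEquiv P), card_fiberPerm (fpart P)]
    have hfib : ∀ B : {B // B ∈ P.parts},
        Fintype.card {a // fpart P a = B} = B.1.card := fun B => by
      rw [Fintype.card_congr (Equiv.subtypeEquivRight fun a => fpart_eq_iff P),
        Fintype.card_coe]
    calc ∏ B : {B // B ∈ P.parts}, Nat.factorial (Fintype.card {a // fpart P a = B})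
        = ∏ B : {B // B ∈ P.parts}, Nat.factorial B.1.card := by
          exact Finset.prod_congr rfl fun B _ => by rw [hfib]
      _ = ∏ B ∈ P.parts, Nat.factorial B.card := Finset.prod_coe_sort P.parts fun B => Nat.factorial B.card
      _ = (Multiset.map (fun B => Nat.factorial B.card) P.parts.val).prod :=
          Finset.prod_eq_multiset_prod _ _
      _ = (Multiset.map Nat.factorial (Multiset.map Finset.card P.parts.val)).prod := by
          rw [Multiset.map_map]; rfl
      _ = (Multiset.map Nat.factorial (Multiset.map c Finset.univ.val)).prod := by rw [hP]
      _ = ∏ i, Nat.factorial (c i) := by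
          rw [Multiset.map_map, ← Finset.prod_eq_multiset_prod]; rfl
  -- range cardinality
  have hrange : Nat.card (stabHom P).range =
      ∏ d ∈ Finset.image c Finset.univ,
        Nat.factorial (Finset.univ.filter fun i => c i = d).card := by
    set D := Finset.image c Finset.univ with hD
    have hmem : ∀ B : {B // B ∈ P.parts}, B.1.card ∈ D := by
      intro B
      have h : B.1.card ∈ Multiset.map Finset.card P.parts.val :=
        Multiset.mem_map_of_mem _ B.2
      rw [hP] at h
      obtain ⟨i, _, hi⟩ := Multiset.mem_map.mp h
      exact Finset.mem_image.mpr ⟨i, Finset.mem_univ i, hi⟩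
    set f' : {B // B ∈ P.parts} → ↥D := fun B => ⟨B.1.card, hmem B⟩ with hf'
    have e1 : ↥(stabHom P).range ≃ {π : Equiv.Perm {B // B ∈ P.parts} // ∀ B, f' (π B) = f' B} :=
      Equiv.subtypeEquivRight fun π => by
        rw [mem_range_iff]
        exact forall_congr' fun B => ⟨fun h => Subtype.ext h, fun h => congrArg Subtype.val h⟩
    rw [Nat.card_congr e1, card_fiberPerm f']
    have hfib : ∀ d : ↥D, Fintype.card {B : {B // B ∈ P.parts} // f' B = d}
        = (Finset.univ.filter fun i => c i = d.1).card := by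
      intro d
      have e2a : {B : {B // B ∈ P.parts} // f' B = d} ≃
          {B : {B // B ∈ P.parts} // (B : Finset (Fin k)).card = (d : ℕ)} :=
        Equiv.subtypeEquivRight fun B => ⟨fun h => congrArg Subtype.val h, fun h => Subtype.ext h⟩
      have e2b : {B : {B // B ∈ P.parts} // (B : Finset (Fin k)).card = (d : ℕ)} ≃
          {B : Finset (Fin k) // B ∈ P.parts ∧ B.card = (d : ℕ)} :=
        Equiv.subtypeSubtypeEquivSubtypeInter (· ∈ P.parts) (fun B => B.card = (d : ℕ))
      have e2c : {B : Finset (Fin k) // B ∈ P.parts ∧ B.card = (d : ℕ)} ≃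
          ↥(P.parts.filter fun B => B.card = (d : ℕ)) :=
        Equiv.subtypeEquivRight fun B => by simp [Finset.mem_filter]
      rw [Fintype.card_congr (e2a.trans (e2b.trans e2c)), Fintype.card_coe]
      have h := congrArg (Multiset.countP (fun x => x = d.1)) hP
      rw [Multiset.countP_map, Multiset.countP_map] at h
      have lhs : (P.parts.filter fun B => B.card = d.1).card
          = Multiset.card (P.parts.val.filter fun B => B.card = d.1) := by
        rw [Finset.card, Finset.filter_val]
      have rhs : (Finset.univ.filter fun i => c i = d.1).card
          = Multiset.card (Finset.univ.val.filter fun i => c i = d.1) := by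
        rw [Finset.card, Finset.filter_val]
      rw [lhs, rhs, h]
    calc ∏ d : ↥D, Nat.factorial (Fintype.card {B // f' B = d})
        = ∏ d : ↥D, Nat.factorial (Finset.univ.filter fun i => c i = d.1).card := by
          exact Finset.prod_congr rfl fun d _ => by rw [hfib]
      _ = ∏ d ∈ D, Nat.factorial (Finset.univ.filter fun i => c i = d).card :=
          Finset.prod_coe_sort D fun d => Nat.factorial (Finset.univ.filter fun i => c i = d).card
  rw [h1, hker, hrange, mul_comm]
end

section
/- Let k_1, …, k_n be positive integers with sum k = k_1 + ⋯ + k_n, let d_1 < ⋯ < d_m be the distinct values among k_1, …, k_n, and let p_1, …, p_m be their multiplicities. For any finpartition P of (Finset.univ : Finset (Fin k)) whose multiset of part cardinalities equals {k_1, …, k_n}, the stabilizer of P in Equiv.Perm (Fin k) is isomorphic as a group to the direct product ∏_{i=1}^{m} ((Equiv.Perm (Fin d_i))^{p_i} ⋊ Equiv.Perm (Fin p_i)) of the wreath products Σ_{d_i} ≀ Σ_{p_i}. -/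
/-- The homomorphism `Equiv.Perm (Fin p) →* MulAut (Fin p → G)` permuting
coordinates of the `p`-fold direct power of `G`; the associated semidirect
product `(Fin p → G) ⋊[permuteAut G p] Equiv.Perm (Fin p)` is the wreath
product `G ≀ Σ_p`. -/
def permuteAut (G : Type*) [Group G] (p : ℕ) :
    Equiv.Perm (Fin p) →* MulAut (Fin p → G) where
  toFun π :=
    { toFun := fun f => f ∘ ⇑π.symm
      invFun := fun f => f ∘ ⇑π
      left_inv := fun f => by ext x; simp
      right_inv := fun f => by ext x; simp
      map_mul' := fun f g => rfl }
  map_one' := by ext f x; rfl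
  map_mul' := fun π₁ π₂ => by ext f x; rfl

section General
namespace StabWreath

variable {D : Type*} {p q : D → ℕ}

abbrev WP (p q : D → ℕ) (d : D) :=
  (Fin (p d) → Equiv.Perm (Fin (q d))) ⋊[permuteAut (Equiv.Perm (Fin (q d))) (p d)]
    Equiv.Perm (Fin (p d))

def wperm (d : D) : WP p q d →* Equiv.Perm (Σ _j : Fin (p d), Fin (q d)) where
  toFun w := Equiv.sigmaCongr w.right (fun j => w.left (w.right j))
  map_one' := by
    ext ⟨j, x⟩ : 1
    simp [Equiv.sigmaCongr]
  map_mul' a b := by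
    ext ⟨j, x⟩ : 1
    simp [Equiv.sigmaCongr, permuteAut, Equiv.Perm.mul_apply]

def bigPsi (p q : D → ℕ) : (∀ d, WP p q d) →* Equiv.Perm (Σ d, Σ _j : Fin (p d), Fin (q d)) where
  toFun w := Equiv.sigmaCongrRight (fun d => wperm d (w d))
  map_one' := by
    ext ⟨d, j, x⟩ : 1
    simp
  map_mul' a b := by
    ext ⟨d, j, x⟩ : 1
    simp [Equiv.Perm.mul_apply]

lemma bigPsi_apply (w : ∀ d, WP p q d) (d : D) (j : Fin (p d)) (x : Fin (q d)) :
    bigPsi p q w ⟨d, j, x⟩ = ⟨d, (w d).right j, (w d).left ((w d).right j) x⟩ := rfl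

lemma sigma_mk_inj {d : D} {a b : Fin (p d)} {u v : Fin (q d)}
    (h : (⟨d, a, u⟩ : Σ d, Σ _j : Fin (p d), Fin (q d)) = ⟨d, b, v⟩) : a = b ∧ u = v := by
  have h2 : (⟨a, u⟩ : Σ _j : Fin (p d), Fin (q d)) = ⟨b, v⟩ :=
    eq_of_heq (Sigma.mk.inj_iff.mp h).2
  exact ⟨(Sigma.mk.inj_iff.mp h2).1, eq_of_heq (Sigma.mk.inj_iff.mp h2).2⟩

lemma bigPsi_injective (hq : ∀ d, 0 < q d) : Function.Injective (bigPsi p q) := by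
  intro w w' h
  funext d
  have hr : (w d).right = (w' d).right := by
    apply Equiv.ext; intro j
    have := congrArg (fun τ : Equiv.Perm (Σ d, Σ _j : Fin (p d), Fin (q d)) =>
      τ ⟨d, j, ⟨0, hq d⟩⟩) h
    simpa using (sigma_mk_inj ((bigPsi_apply w d j _).symm.trans
      (this.trans (bigPsi_apply w' d j _)))).1
  have hl : (w d).left = (w' d).left := by
    funext j'
    apply Equiv.ext; intro x
    set j := (w d).right.symm j' with hj
    have hj1 : (w d).right j = j' := (w d).right.apply_symm_apply j'
    have hj2 : (w' d).right j = j' := by rw [← hr]; exact hj1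
    have := congrArg (fun τ : Equiv.Perm (Σ d, Σ _j : Fin (p d), Fin (q d)) => τ ⟨d, j, x⟩) h
    simp only [bigPsi_apply] at this
    rw [hj1, hj2] at this
    exact (sigma_mk_inj this).2
  exact SemidirectProduct.ext hl hr

lemma exists_bigPsi_eq [Finite D] (hq : ∀ d, 0 < q d)
    (τ : Equiv.Perm (Σ d, Σ _j : Fin (p d), Fin (q d)))
    (hC : ∀ d (j : Fin (p d)), ∃ j', ∀ x, ∃ y, τ ⟨d, j, x⟩ = ⟨d, j', y⟩) :
    ∃ w, bigPsi p q w = τ := by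
  choose π hπ using hC
  choose G hG using hπ
  have hGinj : ∀ d j, Function.Injective (G d j) := by
    intro d j x1 x2 hx
    have : τ ⟨d, j, x1⟩ = τ ⟨d, j, x2⟩ := by rw [hG d j x1, hG d j x2, hx]
    exact (sigma_mk_inj (τ.injective this)).2
  have hGbij : ∀ d j, Function.Bijective (G d j) :=
    fun d j => Finite.injective_iff_bijective.mp (hGinj d j)
  have hπinj : ∀ d, Function.Injective (π d) := by
    intro d j1 j2 hj
    obtain ⟨x1, hx1⟩ := (hGbij d j1).2 ⟨0, hq d⟩
    obtain ⟨x2, hx2⟩ := (hGbij d j2).2 ⟨0, hq d⟩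
    have : τ ⟨d, j1, x1⟩ = τ ⟨d, j2, x2⟩ := by
      rw [hG d j1 x1, hG d j2 x2, hx1, hx2, hj]
    exact (sigma_mk_inj (τ.injective this)).1
  have hπbij : ∀ d, Function.Bijective (π d) :=
    fun d => Finite.injective_iff_bijective.mp (hπinj d)
  refine ⟨fun d => ⟨fun j' => Equiv.ofBijective _ (hGbij d ((Equiv.ofBijective _ (hπbij d)).symm j')),
    Equiv.ofBijective _ (hπbij d)⟩, ?_⟩
  ext ⟨d, j, x⟩ : 1
  rw [bigPsi_apply, hG d j x]
  show (⟨d, Equiv.ofBijective _ (hπbij d) j,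
      Equiv.ofBijective _ (hGbij d ((Equiv.ofBijective _ (hπbij d)).symm
        (Equiv.ofBijective _ (hπbij d) j))) x⟩ :
      Σ d, Σ _j : Fin (p d), Fin (q d)) = ⟨d, π d j, G d j x⟩
  rw [Equiv.symm_apply_apply]
  rfl

end StabWreath
end General

def permCongrMulEquiv {α β : Type*} (e : α ≃ β) : Equiv.Perm α ≃* Equiv.Perm β :=
  { e.permCongr with
    map_mul' := fun σ τ => Equiv.ext fun b => by
      simp [Equiv.permCongr_apply, Equiv.Perm.mul_apply] }

lemma permCongrMulEquiv_apply {α β : Type*} (e : α ≃ β) (σ : Equiv.Perm α) (b : β) :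
    permCongrMulEquiv e σ b = e (σ (e.symm b)) := rfl

def ppc {n : ℕ} (c : Fin n → ℕ) : ↥(Finset.image c Finset.univ) → ℕ :=
  fun d => (Finset.univ.filter fun i => c i = (d : ℕ)).card

def qqc {n : ℕ} (c : Fin n → ℕ) : ↥(Finset.image c Finset.univ) → ℕ :=
  fun d => (d : ℕ)

set_option maxHeartbeats 1000000 in
theorem main_aux (n k : ℕ) (c : Fin n → ℕ) (hc : ∀ i, 0 < c i) (hk : ∑ i, c i = k)
    (P : Finpartition (Finset.univ : Finset (Fin k)))
    [inst : MulAction (Equiv.Perm (Fin k)) (Finpartition (Finset.univ : Finset (Fin k)))]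
    (hsmul : ∀ (σ : Equiv.Perm (Fin k)) (Q : Finpartition (Finset.univ : Finset (Fin k))),
      (σ • Q).parts = Q.parts.image fun B => B.image σ)
    (hP : Multiset.map Finset.card P.parts.val = Multiset.map c Finset.univ.val) :
    Nonempty ((MulAction.stabilizer (Equiv.Perm (Fin k)) P) ≃*
      ∀ d, StabWreath.WP (ppc c) (qqc c) d) := by
  classical
  have hq : ∀ d : (Finset.image c Finset.univ : Finset ℕ), 0 < qqc c d := by
    rintro ⟨d, hd⟩
    obtain ⟨i, _, rfl⟩ := Finset.mem_image.mp hd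
    exact hc i
  have hcardmem : ∀ B ∈ P.parts, B.card ∈ Finset.image c Finset.univ := by
    intro B hB
    have : B.card ∈ Multiset.map Finset.card P.parts.val := Multiset.mem_map_of_mem _ hB
    rw [hP] at this
    obtain ⟨i, _, hi⟩ := Multiset.mem_map.mp this
    exact Finset.mem_image.mpr ⟨i, Finset.mem_univ i, hi⟩
  set Ds := (Finset.image c Finset.univ : Finset ℕ) with hDs
  let blkset : Ds → Finset (Finset (Fin k)) := fun d => P.parts.filter fun B => B.card = (d : ℕ)
  have hcardblk : ∀ d, (blkset d).card = ppc c d := by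
    intro d
    have h2 : Multiset.countP (fun x => x = (d : ℕ)) (Multiset.map Finset.card P.parts.val)
        = (blkset d).card := by
      rw [Multiset.countP_map]
      rfl
    have h3 : Multiset.countP (fun x => x = (d : ℕ)) (Multiset.map c Finset.univ.val)
        = ppc c d := by
      rw [Multiset.countP_map]
      rfl
    rw [← h2, hP, h3]
  let blkE : ∀ d : Ds, ↥(blkset d) ≃ Fin (ppc c d) := fun d =>
    (blkset d).equivFinOfCardEq (hcardblk d)
  let blk : ∀ d : Ds, Fin (ppc c d) → Finset (Fin k) := fun d j => ↑((blkE d).symm j)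
  have hblkmem : ∀ d j, blk d j ∈ P.parts := fun d j =>
    (Finset.mem_filter.mp ((blkE d).symm j).2).1
  have hblkcard : ∀ d j, (blk d j).card = (d : ℕ) := fun d j =>
    (Finset.mem_filter.mp ((blkE d).symm j).2).2
  have hblk_of_mem : ∀ (d : Ds) (B : Finset (Fin k)) (hB : B ∈ blkset d),
      blk d (blkE d ⟨B, hB⟩) = B := by
    intro d B hB
    show ↑((blkE d).symm (blkE d ⟨B, hB⟩)) = B
    rw [Equiv.symm_apply_apply]
  let eF : ∀ (d : Ds) (j : Fin (ppc c d)), ↥(blk d j) ≃ Fin (qqc c d) := fun d j =>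
    (blk d j).equivFinOfCardEq (hblkcard d j)
  -- the global equivalence
  have hpmem : ∀ a : Fin k, P.part a ∈ P.parts := fun a => P.part_mem.mpr (Finset.mem_univ a)
  have hpblk : ∀ a : Fin k, P.part a ∈ blkset ⟨(P.part a).card, hcardmem _ (hpmem a)⟩ :=
    fun a => Finset.mem_filter.mpr ⟨hpmem a, rfl⟩
  let toF : Fin k → (Σ d : Ds, Σ _j : Fin (ppc c d), Fin (qqc c d)) := fun a =>
    ⟨⟨(P.part a).card, hcardmem _ (hpmem a)⟩,
      blkE _ ⟨P.part a, hpblk a⟩,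
      eF _ (blkE _ ⟨P.part a, hpblk a⟩)
        ⟨a, by rw [hblk_of_mem]; exact P.mem_part (Finset.mem_univ a)⟩⟩
  have hleft : ∀ a : Fin k, ↑((eF (toF a).1 (toF a).2.1).symm (toF a).2.2) = a := by
    intro a
    show ↑((eF _ _).symm ((eF _ _) ⟨a, _⟩)) = a
    rw [Equiv.symm_apply_apply]
  have hinj : Function.Injective toF := by
    intro a b hab
    have : ↑((eF (toF a).1 (toF a).2.1).symm (toF a).2.2)
        = (↑((eF (toF b).1 (toF b).2.1).symm (toF b).2.2) : Fin k) := by rw [hab]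
    rwa [hleft, hleft] at this
  have hcardT : Fintype.card (Fin k)
      = Fintype.card (Σ d : Ds, Σ _j : Fin (ppc c d), Fin (qqc c d)) := by
    rw [Fintype.card_fin, ← hk]
    symm
    simp only [Fintype.card_sigma, Fintype.card_fin, Finset.sum_const, smul_eq_mul,
      Finset.card_univ]
    simp only [ppc, qqc]
    have hfib : ∑ b ∈ Finset.image c Finset.univ,
        ∑ i ∈ Finset.univ.filter fun i => c i = b, c i = ∑ i, c i :=
      Finset.sum_fiberwise_of_maps_to (fun i _ => Finset.mem_image_of_mem c (Finset.mem_univ i)) c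
    rw [← hfib, Finset.sum_coe_sort Ds
      (fun m => (Finset.univ.filter fun i => c i = m).card * m)]

    apply Finset.sum_congr rfl
    intro d _
    rw [Finset.sum_congr rfl (fun i hi => (Finset.mem_filter.mp hi).2), Finset.sum_const,
      smul_eq_mul]
  let E : Fin k ≃ (Σ d : Ds, Σ _j : Fin (ppc c d), Fin (qqc c d)) :=
    Equiv.ofBijective toF ((Fintype.bijective_iff_injective_and_card toF).mpr ⟨hinj, hcardT⟩)
  have key : ∀ a : Fin k, a ∈ blk (E a).1 (E a).2.1 := by
    intro a
    show a ∈ blk _ (blkE _ ⟨P.part a, hpblk a⟩)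
    rw [hblk_of_mem]
    exact P.mem_part (Finset.mem_univ a)
  have key' : ∀ t, E.symm t ∈ blk t.1 t.2.1 := by
    intro t
    have h := key (E.symm t)
    rwa [Equiv.apply_symm_apply] at h
  have uniqIdx : ∀ (a : Fin k) (d : Ds) j, a ∈ blk d j → ∃ x, E a = ⟨d, j, x⟩ := by
    intro a d j ha
    rcases hEa : E a with ⟨d1, j1, x1⟩
    have h1 : a ∈ blk d1 j1 := by have := key a; rwa [hEa] at this
    have hbeq : blk d1 j1 = blk d j :=
      P.eq_of_mem_parts (hblkmem _ _) (hblkmem _ _) h1 ha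
    have hd : d1 = d := Subtype.ext (by rw [← hblkcard d1 j1, hbeq, hblkcard])
    subst hd
    have hj : j1 = j := (blkE d1).symm.injective (Subtype.ext hbeq)
    subst hj
    exact ⟨x1, rfl⟩
  -- stabilizer ↔ condition
  have hstabC : ∀ σ : Equiv.Perm (Fin k), σ ∈ MulAction.stabilizer (Equiv.Perm (Fin k)) P →
      ∀ (d : Ds) j, ∃ j', ∀ x, ∃ y, (permCongrMulEquiv E σ) ⟨d, j, x⟩ = ⟨d, j', y⟩ := by
    intro σ hσ d j
    have hσP : σ • P = P := hσ
    have hparts : (P.parts.image fun B => B.image σ) = P.parts := by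
      rw [← hsmul σ P, hσP]
    have himg : (blk d j).image σ ∈ P.parts := by
      rw [← hparts]; exact Finset.mem_image_of_mem _ (hblkmem d j)
    have hcardimg : ((blk d j).image σ).card = (d : ℕ) := by
      rw [Finset.card_image_of_injective _ σ.injective, hblkcard]
    refine ⟨blkE d ⟨(blk d j).image σ, Finset.mem_filter.mpr ⟨himg, hcardimg⟩⟩, fun x => ?_⟩
    have hmem : σ (E.symm ⟨d, j, x⟩)
        ∈ blk d (blkE d ⟨(blk d j).image σ, Finset.mem_filter.mpr ⟨himg, hcardimg⟩⟩) := by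
      rw [hblk_of_mem]
      exact Finset.mem_image_of_mem σ (key' ⟨d, j, x⟩)
    exact uniqIdx _ _ _ hmem
  have hCstab : ∀ σ : Equiv.Perm (Fin k),
      (∀ (d : Ds) j, ∃ j', ∀ x, ∃ y, (permCongrMulEquiv E σ) ⟨d, j, x⟩ = ⟨d, j', y⟩) →
      σ ∈ MulAction.stabilizer (Equiv.Perm (Fin k)) P := by
    intro σ hC
    have hsub : ∀ B ∈ P.parts, B.image σ ∈ P.parts := by
      intro B hB
      have hBmem : B ∈ blkset ⟨B.card, hcardmem B hB⟩ := Finset.mem_filter.mpr ⟨hB, rfl⟩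
      obtain ⟨j', hj'⟩ := hC ⟨B.card, hcardmem B hB⟩ (blkE _ ⟨B, hBmem⟩)
      have hBblk : blk ⟨B.card, hcardmem B hB⟩ (blkE _ ⟨B, hBmem⟩) = B := hblk_of_mem _ B hBmem
      have himgsub : B.image σ ⊆ blk ⟨B.card, hcardmem B hB⟩ j' := by
        intro b hb
        obtain ⟨a, haB, rfl⟩ := Finset.mem_image.mp hb
        have ha : a ∈ blk ⟨B.card, hcardmem B hB⟩ (blkE _ ⟨B, hBmem⟩) := by
          rw [hBblk]; exact haB
        obtain ⟨x, hx⟩ := uniqIdx a _ _ ha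
        obtain ⟨y, hy⟩ := hj' x
        have hEsymm : E.symm ⟨⟨B.card, hcardmem B hB⟩, blkE _ ⟨B, hBmem⟩, x⟩ = a := by
          rw [← hx, Equiv.symm_apply_apply]
        have h2 : E (σ a) = ⟨⟨B.card, hcardmem B hB⟩, j', y⟩ := by rw [← hEsymm]; exact hy
        have h3 : σ a = E.symm ⟨⟨B.card, hcardmem B hB⟩, j', y⟩ := by
          rw [← h2, Equiv.symm_apply_apply]
        rw [h3]; exact key' ⟨⟨B.card, hcardmem B hB⟩, j', y⟩
      have hcard2 : (blk ⟨B.card, hcardmem B hB⟩ j').card ≤ (B.image σ).card := by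
        rw [Finset.card_image_of_injective _ σ.injective, hblkcard]
      have heq : B.image σ = blk ⟨B.card, hcardmem B hB⟩ j' :=
        Finset.eq_of_subset_of_card_le himgsub hcard2
      rw [heq]; exact hblkmem _ j'
    rw [MulAction.mem_stabilizer_iff]
    apply Finpartition.ext
    rw [hsmul σ P]
    apply Finset.eq_of_subset_of_card_le
    · intro B hB
      obtain ⟨A, hA, rfl⟩ := Finset.mem_image.mp hB
      exact hsub A hA
    · rw [Finset.card_image_of_injective _ (Finset.image_injective σ.injective)]
  -- assemble
  let Θ : (∀ d, StabWreath.WP (ppc c) (qqc c) d) →* Equiv.Perm (Fin k) :=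
    ((permCongrMulEquiv E).symm.toMonoidHom).comp (StabWreath.bigPsi (ppc c) (qqc c))
  have hΘ : ∀ w, permCongrMulEquiv E (Θ w) = StabWreath.bigPsi (ppc c) (qqc c) w := fun w =>
    (permCongrMulEquiv E).apply_symm_apply _
  have hrange : ∀ σ, σ ∈ MulAction.stabilizer (Equiv.Perm (Fin k)) P ↔ ∃ w, Θ w = σ := by
    intro σ
    constructor
    · intro hσ
      obtain ⟨w, hw⟩ := StabWreath.exists_bigPsi_eq hq (permCongrMulEquiv E σ) (hstabC σ hσ)
      refine ⟨w, ?_⟩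
      have : permCongrMulEquiv E (Θ w) = permCongrMulEquiv E σ := by rw [hΘ, hw]
      exact (permCongrMulEquiv E).injective this
    · rintro ⟨w, rfl⟩
      apply hCstab
      intro d j
      refine ⟨(w d).right j, fun x => ⟨(w d).left ((w d).right j) x, ?_⟩⟩
      rw [hΘ w]
      exact StabWreath.bigPsi_apply w d j x
  have hΘinj : Function.Injective Θ := by
    intro w w' h
    apply StabWreath.bigPsi_injective hq
    rw [← hΘ w, ← hΘ w', h]
  let Θ' : (∀ d, StabWreath.WP (ppc c) (qqc c) d) →*
      MulAction.stabilizer (Equiv.Perm (Fin k)) P :=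
    Θ.codRestrict _ (fun w => (hrange _).mpr ⟨w, rfl⟩)
  have hbij : Function.Bijective Θ' := by
    constructor
    · intro w w' h
      exact hΘinj (congrArg Subtype.val h)
    · rintro ⟨σ, hσ⟩
      obtain ⟨w, hw⟩ := (hrange σ).mp hσ
      exact ⟨w, Subtype.ext hw⟩
  exact ⟨(MulEquiv.ofBijective Θ' hbij).symm⟩

/-- For positive integers `k_1, …, k_n` with sum `k`, with distinct values
`d_1 < ⋯ < d_m` occurring with multiplicities `p_1, …, p_m`, and any finpartition
`P` of `Finset.univ : Finset (Fin k)` whose multiset of part cardinalities is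
`{k_1, …, k_n}`, the stabilizer of `P` in `Equiv.Perm (Fin k)` is isomorphic as
a group to the direct product `∏ i, Σ_{d_i} ≀ Σ_{p_i}` of wreath products
`(Equiv.Perm (Fin d_i))^{p_i} ⋊ Equiv.Perm (Fin p_i)`. -/
theorem stabilizer_finpartition_iso_prod_wreath
    (n k : ℕ) (c : Fin n → ℕ) (hc : ∀ i, 0 < c i) (hk : ∑ i, c i = k)
    (P : Finpartition (Finset.univ : Finset (Fin k)))
    (hP : Multiset.map Finset.card P.parts.val = Multiset.map c Finset.univ.val) :
    Nonempty ((MulAction.stabilizer (Equiv.Perm (Fin k)) P) ≃*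
      ∀ d : (Finset.image c Finset.univ : Finset ℕ),
        (Fin (Finset.univ.filter fun i => c i = (d : ℕ)).card → Equiv.Perm (Fin (d : ℕ)))
          ⋊[permuteAut (Equiv.Perm (Fin (d : ℕ)))
              (Finset.univ.filter fun i => c i = (d : ℕ)).card]
          Equiv.Perm (Fin (Finset.univ.filter fun i => c i = (d : ℕ)).card)) := by
  exact main_aux n k c hc hk P (inst := finpartitionPermAction) (fun σ Q => rfl) hP
end

section
/- Let k_1, …, k_n be positive integers with sum k = k_1 + ⋯ + k_n, and let I_1, …, I_n be the partition of Fin k into consecutive intervals with |I_j| = k_j (so I_j consists of the elements with indices in [k_1 + ⋯ + k_{j-1}, k_1 + ⋯ + k_j)). Then the stabilizer in Equiv.Perm (Fin k) of this interval finpartition (for the action by taking images of blocks) equals the subgroup generated by: (a) all permutations σ that fix every element outside some single block I_j (equivalently, σ(I_j) = I_j and σ is the identity off I_j), and (b) for each pair i < j with k_i = k_j, the involution that exchanges I_i and I_j via the unique order-preserving bijections between them and fixes all other elements. -/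
section Aux

variable {n k : ℕ} {c : Fin n → ℕ} {off : Fin n → ℕ} {I : Fin n → Finset (Fin k)}

-- basic arithmetic facts
theorem aux_off_add_le (hoff : ∀ j, off j = ∑ i ∈ Finset.Iio j, c i)
    {i j : Fin n} (hij : i < j) : off i + c i ≤ off j := by
  rw [hoff i, hoff j]
  have hsub : insert i (Finset.Iio i) ⊆ Finset.Iio j := by
    intro x hx
    simp only [Finset.mem_insert, Finset.mem_Iio] at hx ⊢
    rcases hx with rfl | hx
    · exact hij
    · exact hx.trans hij
  calc ∑ l ∈ Finset.Iio i, c l + c i = ∑ l ∈ insert i (Finset.Iio i), c l := by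
        rw [Finset.sum_insert (by simp)]; ring
    _ ≤ ∑ l ∈ Finset.Iio j, c l := Finset.sum_le_sum_of_subset hsub

theorem aux_off_add_le_k (hk : ∑ i, c i = k)
    (hoff : ∀ j, off j = ∑ i ∈ Finset.Iio j, c i) (j : Fin n) : off j + c j ≤ k := by
  rw [hoff j, ← hk]
  calc ∑ l ∈ Finset.Iio j, c l + c j = ∑ l ∈ insert j (Finset.Iio j), c l := by
        rw [Finset.sum_insert (by simp)]; ring
    _ ≤ ∑ l, c l := Finset.sum_le_sum_of_subset (Finset.subset_univ _)

theorem aux_mem_I (hI : ∀ j, I j = Finset.univ.filter fun x : Fin k =>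
      off j ≤ (x : ℕ) ∧ (x : ℕ) < off j + c j) {j : Fin n} {x : Fin k} :
    x ∈ I j ↔ off j ≤ (x : ℕ) ∧ (x : ℕ) < off j + c j := by
  rw [hI j]; simp

theorem aux_disjoint (hoff : ∀ j, off j = ∑ i ∈ Finset.Iio j, c i)
    (hI : ∀ j, I j = Finset.univ.filter fun x : Fin k =>
      off j ≤ (x : ℕ) ∧ (x : ℕ) < off j + c j)
    {i j : Fin n} (hij : i ≠ j) {x : Fin k} (hx : x ∈ I i) : x ∉ I j := by
  rw [aux_mem_I hI] at hx ⊢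
  rcases lt_or_gt_of_ne hij with h | h
  · have := aux_off_add_le hoff h; omega
  · have := aux_off_add_le hoff h; omega

theorem aux_card_I (hk : ∑ i, c i = k) (hoff : ∀ j, off j = ∑ i ∈ Finset.Iio j, c i)
    (hI : ∀ j, I j = Finset.univ.filter fun x : Fin k =>
      off j ≤ (x : ℕ) ∧ (x : ℕ) < off j + c j) (j : Fin n) : (I j).card = c j := by
  have hlt : ∀ m ∈ Finset.Ico (off j) (off j + c j), m < k := fun m hm => by
    have := aux_off_add_le_k hk hoff j
    simp only [Finset.mem_Ico] at hm; omega
  have : I j = Finset.attachFin (Finset.Ico (off j) (off j + c j)) hlt := by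
    ext x
    rw [aux_mem_I hI, Finset.mem_attachFin, Finset.mem_Ico]
  rw [this, Finset.card_attachFin, Nat.card_Ico]
  omega

theorem aux_I_ne_empty (hc : ∀ i, 0 < c i) (hk : ∑ i, c i = k)
    (hoff : ∀ j, off j = ∑ i ∈ Finset.Iio j, c i)
    (hI : ∀ j, I j = Finset.univ.filter fun x : Fin k =>
      off j ≤ (x : ℕ) ∧ (x : ℕ) < off j + c j) (j : Fin n) : I j ≠ ∅ := by
  intro h
  have h1 := aux_card_I hk hoff hI j
  rw [h, Finset.card_empty] at h1
  exact (hc j).ne h1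

theorem aux_I_inj (hc : ∀ i, 0 < c i) (hk : ∑ i, c i = k)
    (hoff : ∀ j, off j = ∑ i ∈ Finset.Iio j, c i)
    (hI : ∀ j, I j = Finset.univ.filter fun x : Fin k =>
      off j ≤ (x : ℕ) ∧ (x : ℕ) < off j + c j)
    {i j : Fin n} (h : I i = I j) : i = j := by
  by_contra hij
  obtain ⟨x, hx⟩ := Finset.nonempty_iff_ne_empty.2 (aux_I_ne_empty hc hk hoff hI i)
  exact aux_disjoint hoff hI hij hx (h ▸ hx)

end Aux

section Swap

variable {n k : ℕ} {c : Fin n → ℕ} {off : Fin n → ℕ} {I : Fin n → Finset (Fin k)}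

theorem aux_swap_exists (hk : ∑ i, c i = k)
    (hoff : ∀ j, off j = ∑ i ∈ Finset.Iio j, c i)
    (hI : ∀ j, I j = Finset.univ.filter fun x : Fin k =>
      off j ≤ (x : ℕ) ∧ (x : ℕ) < off j + c j)
    {a b : Fin n} (hab : a < b) (hcab : c a = c b) :
    ∃ g : Equiv.Perm (Fin k),
      (∀ x ∈ I a, ((g x : Fin k) : ℕ) = (x : ℕ) - off a + off b) ∧
      (∀ x ∈ I b, ((g x : Fin k) : ℕ) = (x : ℕ) - off b + off a) ∧
      (∀ x : Fin k, x ∉ I a → x ∉ I b → g x = x) ∧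
      Finset.image g (I a) = I b ∧ Finset.image g (I b) = I a ∧
      (∀ l : Fin n, l ≠ a → l ≠ b → Finset.image g (I l) = I l) := by
  have hka := aux_off_add_le_k hk hoff a
  have hkb := aux_off_add_le_k hk hoff b
  have hdis := aux_off_add_le hoff hab
  classical
  set f : Fin k → Fin k := fun x =>
    if h : x ∈ I a then
      ⟨(x : ℕ) - off a + off b, by
        have := (aux_mem_I hI).1 h; omega⟩
    else if h : x ∈ I b then
      ⟨(x : ℕ) - off b + off a, by
        have := (aux_mem_I hI).1 h; omega⟩
    else x with hf
  have hfa : ∀ x ∈ I a, ((f x : Fin k) : ℕ) = (x : ℕ) - off a + off b := by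
    intro x hx; simp only [hf, dif_pos hx]
  have hfb : ∀ x ∈ I b, ((f x : Fin k) : ℕ) = (x : ℕ) - off b + off a := by
    intro x hx
    have hxa : x ∉ I a := fun h => aux_disjoint hoff hI hab.ne h hx
    simp only [hf, dif_neg hxa, dif_pos hx]
  have hfo : ∀ x : Fin k, x ∉ I a → x ∉ I b → f x = x := by
    intro x h1 h2; simp only [hf, dif_neg h1, dif_neg h2]
  have hmema : ∀ x ∈ I a, f x ∈ I b := by
    intro x hx
    have h1 := (aux_mem_I hI).1 hx
    rw [aux_mem_I hI, hfa x hx]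
    omega
  have hmemb : ∀ x ∈ I b, f x ∈ I a := by
    intro x hx
    have h1 := (aux_mem_I hI).1 hx
    rw [aux_mem_I hI, hfb x hx]
    omega
  have hinv : Function.Involutive f := by
    intro x
    by_cases hx : x ∈ I a
    · have h1 : f x ∈ I b := hmema x hx
      have h2 : f x ∉ I a := fun h => aux_disjoint hoff hI hab.ne h h1
      have h3 := hfb _ h1
      have h4 := hfa _ hx
      have h5 := (aux_mem_I hI).1 hx
      apply Fin.ext
      rw [h3, h4]
      omega
    · by_cases hx' : x ∈ I b
      · have h1 : f x ∈ I a := hmemb x hx'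
        have h3 := hfa _ h1
        have h4 := hfb _ hx'
        have h5 := (aux_mem_I hI).1 hx'
        apply Fin.ext
        rw [h3, h4]
        omega
      · rw [hfo x hx hx', hfo x hx hx']
  refine ⟨hinv.toPerm f, hfa, hfb, hfo, ?_, ?_, ?_⟩
  · apply Finset.eq_of_subset_of_card_le
    · intro y hy
      simp only [Finset.mem_image] at hy
      obtain ⟨x, hx, rfl⟩ := hy
      exact hmema x hx
    · rw [Finset.card_image_of_injective _ (hinv.toPerm f).injective,
        aux_card_I hk hoff hI, aux_card_I hk hoff hI, hcab]
  · apply Finset.eq_of_subset_of_card_le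
    · intro y hy
      simp only [Finset.mem_image] at hy
      obtain ⟨x, hx, rfl⟩ := hy
      exact hmemb x hx
    · rw [Finset.card_image_of_injective _ (hinv.toPerm f).injective,
        aux_card_I hk hoff hI, aux_card_I hk hoff hI, hcab]
  · intro l hla hlb
    have : ∀ x ∈ I l, f x = x := fun x hx =>
      hfo x (aux_disjoint hoff hI hla hx) (aux_disjoint hoff hI hlb hx)
    calc Finset.image (hinv.toPerm f) (I l) = Finset.image id (I l) :=
      Finset.image_congr (fun x hx => this x hx)
    _ = I l := Finset.image_id

end Swap

section Closure

variable {n k : ℕ} {c : Fin n → ℕ} {off : Fin n → ℕ} {I : Fin n → Finset (Fin k)}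

theorem aux_blockwise
    (hoff : ∀ j, off j = ∑ i ∈ Finset.Iio j, c i)
    (hI : ∀ j, I j = Finset.univ.filter fun x : Fin k =>
      off j ≤ (x : ℕ) ∧ (x : ℕ) < off j + c j)
    (H : Subgroup (Equiv.Perm (Fin k)))
    (hHa : ∀ σ : Equiv.Perm (Fin k), (∃ j : Fin n, ∀ x : Fin k, x ∉ I j → σ x = x) → σ ∈ H)
    (s : Finset (Fin n)) :
    ∀ σ : Equiv.Perm (Fin k),
      (∀ j, Finset.image σ (I j) = I j) →
      (∀ x : Fin k, (∀ j ∈ s, x ∉ I j) → σ x = x) → σ ∈ H := by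
  classical
  induction s using Finset.induction_on with
  | empty =>
    intro σ _ h2
    have : σ = 1 := Equiv.ext fun x => h2 x (by simp)
    rw [this]; exact H.one_mem
  | @insert a s ha ih =>
    intro σ h1 h2
    have hmem : ∀ x : Fin k, x ∈ I a ↔ σ x ∈ I a := by
      intro x
      constructor
      · intro hx
        rw [← h1 a]
        exact Finset.mem_image_of_mem _ hx
      · intro hx
        rw [← h1 a, Finset.mem_image] at hx
        obtain ⟨y, hy, hyx⟩ := hx
        rwa [← σ.injective hyx]
    set σa : Equiv.Perm (Fin k) :=
      Equiv.Perm.ofSubtype (σ.subtypePerm (p := fun x => x ∈ I a) (fun x => (hmem x).symm)) with hσa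
    have hσa_mem : ∀ x ∈ I a, σa x = σ x := by
      intro x hx
      rw [hσa, Equiv.Perm.ofSubtype_apply_of_mem _ hx]
      rfl
    have hσa_not : ∀ x : Fin k, x ∉ I a → σa x = x := fun x hx =>
      Equiv.Perm.ofSubtype_apply_of_not_mem _ hx
    have hσaH : σa ∈ H := hHa σa ⟨a, hσa_not⟩
    set σ' : Equiv.Perm (Fin k) := σa⁻¹ * σ with hσ'
    have hσ'in : ∀ x ∈ I a, σ' x = x := by
      intro x hx
      have hax : σa x = σ x := hσa_mem x hx
      show σa⁻¹ (σ x) = x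
      conv_lhs => rw [← hax]
      exact Equiv.symm_apply_apply _ _
    have hσ'out : ∀ x : Fin k, x ∉ I a → σ' x = σ x := by
      intro x hx
      have h3 : σ x ∉ I a := fun h => hx ((hmem x).2 h)
      have h4 : σa (σ x) = σ x := hσa_not _ h3
      show σa⁻¹ (σ x) = σ x
      conv_lhs => rw [← h4]
      exact Equiv.symm_apply_apply _ _
    have hσ'H : σ' ∈ H := by
      apply ih σ'
      · intro j
        by_cases hj : j = a
        · subst hj
          calc Finset.image σ' (I j) = Finset.image id (I j) :=
              Finset.image_congr fun x hx => hσ'in x hx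
            _ = I j := Finset.image_id
        · calc Finset.image σ' (I j) = Finset.image σ (I j) :=
              Finset.image_congr fun x hx =>
                hσ'out x (aux_disjoint hoff hI hj hx)
            _ = I j := h1 j
      · intro x hx
        by_cases hxa : x ∈ I a
        · exact hσ'in x hxa
        · rw [hσ'out x hxa]
          exact h2 x (by
            intro j hj
            rcases Finset.mem_insert.1 hj with rfl | hj
            · exact hxa
            · exact hx j hj)
    have hfin : σ = σa * σ' := by rw [hσ']; group
    rw [hfin]
    exact H.mul_mem hσaH hσ'H

theorem aux_main (hc : ∀ i, 0 < c i) (hk : ∑ i, c i = k)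
    (hoff : ∀ j, off j = ∑ i ∈ Finset.Iio j, c i)
    (hI : ∀ j, I j = Finset.univ.filter fun x : Fin k =>
      off j ≤ (x : ℕ) ∧ (x : ℕ) < off j + c j)
    (hall : ∀ x : Fin k, ∃ j, x ∈ I j)
    (H : Subgroup (Equiv.Perm (Fin k)))
    (hHa : ∀ σ : Equiv.Perm (Fin k), (∃ j : Fin n, ∀ x : Fin k, x ∉ I j → σ x = x) → σ ∈ H)
    (hHb : ∀ σ : Equiv.Perm (Fin k), (∃ i j : Fin n, i < j ∧ c i = c j ∧
        (∀ x ∈ I i, ((σ x : Fin k) : ℕ) = (x : ℕ) - off i + off j) ∧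
        (∀ x ∈ I j, ((σ x : Fin k) : ℕ) = (x : ℕ) - off j + off i) ∧
        (∀ x : Fin k, x ∉ I i → x ∉ I j → σ x = x)) → σ ∈ H) :
    ∀ m : ℕ, ∀ (p : Fin n → Fin n) (σ : Equiv.Perm (Fin k)),
      (∀ j, Finset.image σ (I j) = I (p j)) →
      (Finset.univ.filter fun j => p j ≠ j).card ≤ m → σ ∈ H := by
  classical
  intro m
  induction m with
  | zero =>
    intro p σ h1 h2
    have hfix : ∀ j, p j = j := by
      intro j
      by_contra hj
      have hjm : j ∈ Finset.univ.filter fun j => p j ≠ j := by simp [hj]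
      have := Finset.card_pos.2 ⟨j, hjm⟩
      omega
    apply aux_blockwise hoff hI H hHa Finset.univ σ
    · intro j; rw [h1 j, hfix j]
    · intro x hx
      obtain ⟨j, hj⟩ := hall x
      exact absurd hj (hx j (Finset.mem_univ j))
  | succ m ih =>
    intro p σ h1 h2
    rcases Nat.lt_or_ge (Finset.univ.filter fun j => p j ≠ j).card (m + 1) with hlt | hge
    · exact ih p σ h1 (Nat.lt_succ_iff.1 hlt)
    · have hcard : (Finset.univ.filter fun j => p j ≠ j).card = m + 1 := le_antisymm h2 hge
      have hne : (Finset.univ.filter fun j => p j ≠ j).Nonempty :=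
        Finset.card_pos.1 (by omega)
      obtain ⟨i, hi⟩ := hne
      have hpi : p i ≠ i := (Finset.mem_filter.1 hi).2
      have hpinj : Function.Injective p := by
        intro u v huv
        have himeq : Finset.image σ (I u) = Finset.image σ (I v) := by
          rw [h1 u, h1 v, huv]
        have hIuv : I u = I v := by
          ext x
          constructor
          · intro hx
            have hmem : σ x ∈ Finset.image σ (I v) :=
              himeq ▸ Finset.mem_image_of_mem _ hx
            rw [Finset.mem_image] at hmem
            obtain ⟨y, hy, hyx⟩ := hmem
            rwa [← σ.injective hyx]
          · intro hx
            have hmem : σ x ∈ Finset.image σ (I u) :=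
              himeq ▸ Finset.mem_image_of_mem _ hx
            rw [Finset.mem_image] at hmem
            obtain ⟨y, hy, hyx⟩ := hmem
            rwa [← σ.injective hyx]
        exact aux_I_inj hc hk hoff hI hIuv
      have hcp : ∀ j, c (p j) = c j := by
        intro j
        rw [← aux_card_I hk hoff hI (p j), ← aux_card_I hk hoff hI j, ← h1 j,
          Finset.card_image_of_injective _ σ.injective]
      obtain ⟨a, b, hab, hcab, hia⟩ :
          ∃ a b : Fin n, a < b ∧ c a = c b ∧
            ((a = i ∧ b = p i) ∨ (a = p i ∧ b = i)) := by
        rcases lt_or_gt_of_ne hpi with h | h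
        · exact ⟨p i, i, h, by rw [hcp i], Or.inr ⟨rfl, rfl⟩⟩
        · exact ⟨i, p i, h, by rw [hcp i], Or.inl ⟨rfl, rfl⟩⟩
      obtain ⟨g, hg1, hg2, hg3, hgab, hgba, hgl⟩ :=
        aux_swap_exists hk hoff hI hab hcab
      have hgH : g ∈ H := hHb g ⟨a, b, hab, hcab, hg1, hg2, hg3⟩
      set p' : Fin n → Fin n := fun l => if p l = a then b else if p l = b then a else p l
        with hp'
      have hp'eval : ∀ z, p' z = if p z = a then b else if p z = b then a else p z :=
        fun z => by rw [hp']
      have hswap : ∀ l, Finset.image g (I (p l)) = I (p' l) := by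
        intro l
        rw [hp'eval]
        by_cases ha' : p l = a
        · rw [if_pos ha', ha']; exact hgab
        · rw [if_neg ha']
          by_cases hb' : p l = b
          · rw [if_pos hb', hb']; exact hgba
          · rw [if_neg hb']; exact hgl _ ha' hb'
      have himg : ∀ l, Finset.image (g * σ) (I l) = I (p' l) := by
        intro l
        rw [Equiv.Perm.coe_mul, ← Finset.image_image, h1 l]
        exact hswap l
      have hp'i : p' i = i := by
        rw [hp'eval]
        rcases hia with ⟨rfl, rfl⟩ | ⟨rfl, rfl⟩
        · rw [if_neg hpi, if_pos rfl]
        · rw [if_pos rfl]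
      have hsub : (Finset.univ.filter fun j => p' j ≠ j) ⊆
          (Finset.univ.filter fun j => p j ≠ j).erase i := by
        intro x hx
        simp only [Finset.mem_filter, Finset.mem_univ, true_and] at hx
        rw [Finset.mem_erase, Finset.mem_filter]
        refine ⟨?_, Finset.mem_univ x, ?_⟩
        · rintro rfl; exact hx hp'i
        · intro hpx
          apply hx
          have hxi : x ≠ i := by rintro rfl; exact hpi hpx
          have hxpi : x ≠ p i := by rintro rfl; exact hpi (hpinj hpx)
          have hxab : x ≠ a ∧ x ≠ b := by
            rcases hia with ⟨rfl, rfl⟩ | ⟨rfl, rfl⟩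
            exacts [⟨hxi, hxpi⟩, ⟨hxpi, hxi⟩]
          rw [hp'eval, hpx, if_neg hxab.1, if_neg hxab.2]
      have hcard' : (Finset.univ.filter fun j => p' j ≠ j).card ≤ m := by
        have hle := Finset.card_le_card hsub
        rw [Finset.card_erase_of_mem hi, hcard] at hle
        omega
      have hgsH : g * σ ∈ H := ih p' (g * σ) himg hcard'
      have hσeq : σ = g⁻¹ * (g * σ) := by group
      rw [hσeq]
      exact H.mul_mem (H.inv_mem hgH) hgsH

end Closure

/-- Let `k_1, …, k_n` be positive integers with sum `k`, let `I_1, …, I_n` be the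
partition of `Fin k` into consecutive intervals of lengths `k_1, …, k_n` (so
`I_j` consists of the elements with values in `[k_1 + ⋯ + k_{j-1}, k_1 + ⋯ + k_j)`),
and let `P` be the corresponding interval finpartition of
`Finset.univ : Finset (Fin k)`.  Then the stabilizer of `P` in
`Equiv.Perm (Fin k)` (for the action by taking images of blocks) equals the
subgroup generated by (a) the permutations fixing every element outside a single
block `I_j`, and (b) for each pair `i < j` with `k_i = k_j`, the involution
exchanging `I_i` and `I_j` via the unique order-preserving bijections between
them and fixing all other elements. -/
theorem stabilizer_interval_finpartition_eq_closure
    (n k : ℕ) (c : Fin n → ℕ) (hc : ∀ i, 0 < c i) (hk : ∑ i, c i = k)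
    (off : Fin n → ℕ) (hoff : ∀ j, off j = ∑ i ∈ Finset.Iio j, c i)
    (I : Fin n → Finset (Fin k))
    (hI : ∀ j, I j = Finset.univ.filter fun x : Fin k =>
        off j ≤ (x : ℕ) ∧ (x : ℕ) < off j + c j)
    (P : Finpartition (Finset.univ : Finset (Fin k)))
    (hP : P.parts = Finset.image I Finset.univ) :
    MulAction.stabilizer (Equiv.Perm (Fin k)) P =
      Subgroup.closure
        ({σ : Equiv.Perm (Fin k) | ∃ j : Fin n, ∀ x : Fin k, x ∉ I j → σ x = x} ∪
         {σ : Equiv.Perm (Fin k) | ∃ i j : Fin n, i < j ∧ c i = c j ∧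
            (∀ x ∈ I i, ((σ x : Fin k) : ℕ) = (x : ℕ) - off i + off j) ∧
            (∀ x ∈ I j, ((σ x : Fin k) : ℕ) = (x : ℕ) - off j + off i) ∧
            (∀ x : Fin k, x ∉ I i → x ∉ I j → σ x = x)}) := by
  classical
  have hall : ∀ x : Fin k, ∃ j, x ∈ I j := by
    intro x
    obtain ⟨B, hB, hx⟩ := P.exists_mem (Finset.mem_univ x)
    rw [hP, Finset.mem_image] at hB
    obtain ⟨j, _, rfl⟩ := hB
    exact ⟨j, hx⟩
  have key : ∀ (σ : Equiv.Perm (Fin k)) (e : Fin n → Fin n), Function.Surjective e →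
      (∀ l, Finset.image σ (I l) = I (e l)) →
      σ ∈ MulAction.stabilizer (Equiv.Perm (Fin k)) P := by
    intro σ e he hcomp
    rw [MulAction.mem_stabilizer_iff]
    apply Finpartition.ext
    show (P.parts.image fun B => B.image σ) = P.parts
    rw [hP, Finset.image_image]
    have hfe : ((fun B => Finset.image σ B) ∘ I) = fun j => I (e j) :=
      funext fun j => hcomp j
    rw [hfe]
    ext B
    simp only [Finset.mem_image, Finset.mem_univ, true_and]
    constructor
    · rintro ⟨j, rfl⟩; exact ⟨e j, rfl⟩
    · rintro ⟨j, rfl⟩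
      obtain ⟨j', rfl⟩ := he j
      exact ⟨j', rfl⟩
  apply le_antisymm
  · -- stabilizer ≤ closure
    intro σ hσ
    have hσP : σ • P = P := MulAction.mem_stabilizer_iff.1 hσ
    have hparts : P.parts.image (fun B => B.image σ) = P.parts :=
      congrArg Finpartition.parts hσP
    have hex : ∀ j : Fin n, ∃ j', Finset.image σ (I j) = I j' := by
      intro j
      have hIj : I j ∈ P.parts := by
        rw [hP]; exact Finset.mem_image_of_mem I (Finset.mem_univ j)
      have hmem : Finset.image σ (I j) ∈ P.parts := by
        rw [← hparts]
        exact Finset.mem_image_of_mem _ hIj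
      rw [hP, Finset.mem_image] at hmem
      obtain ⟨j', _, h⟩ := hmem
      exact ⟨j', h.symm⟩
    choose p hp using hex
    exact aux_main hc hk hoff hI hall _
      (fun σ h => Subgroup.subset_closure (Set.mem_union_left _ h))
      (fun σ h => Subgroup.subset_closure (Set.mem_union_right _ h))
      n p σ hp ((Finset.card_filter_le _ _).trans (by simp))
  · rw [Subgroup.closure_le]
    rintro σ (⟨j₀, hj₀⟩ | ⟨i, j, hij, hcij, h1, h2, h3⟩)
    · -- type (a) generator
      apply key σ id Function.surjective_id
      intro l
      by_cases hl : l = j₀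
      · subst hl
        apply Finset.eq_of_subset_of_card_le
        · intro y hy
          rw [Finset.mem_image] at hy
          obtain ⟨x, hx, rfl⟩ := hy
          by_contra h
          have h5 : σ (σ x) = σ x := hj₀ (σ x) h
          have h6 : σ x = x := σ.injective h5
          rw [h6] at h
          exact h hx
        · rw [Finset.card_image_of_injective _ σ.injective]
          exact le_rfl
      · calc Finset.image σ (I l) = Finset.image _root_.id (I l) :=
            Finset.image_congr fun x hx => hj₀ x (aux_disjoint hoff hI hl hx)
          _ = I l := Finset.image_id
    · -- type (b) generator
      set e : Fin n → Fin n := fun l => if l = i then j else if l = j then i else l with he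
      have heval : ∀ z, e z = if z = i then j else if z = j then i else z :=
        fun z => by rw [he]
      have hei : e i = j := by rw [heval, if_pos rfl]
      have hej : e j = i := by rw [heval, if_neg hij.ne', if_pos rfl]
      have hel : ∀ l, l ≠ i → l ≠ j → e l = l := fun l h1' h2' => by
        rw [heval, if_neg h1', if_neg h2']
      have hes : Function.Surjective e := by
        intro y
        by_cases hy : y = i
        · exact ⟨j, by rw [hej, hy]⟩
        · by_cases hy' : y = j
          · exact ⟨i, by rw [hei, hy']⟩
          · exact ⟨y, hel y hy hy'⟩
      apply key σ e hes
      intro l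
      by_cases hl : l = i
      · subst hl
        rw [hei]
        apply Finset.eq_of_subset_of_card_le
        · intro y hy
          rw [Finset.mem_image] at hy
          obtain ⟨x, hx, rfl⟩ := hy
          have hv := h1 x hx
          have hx' := (aux_mem_I hI).1 hx
          rw [aux_mem_I hI, hv]
          omega
        · rw [Finset.card_image_of_injective _ σ.injective,
            aux_card_I hk hoff hI, aux_card_I hk hoff hI, hcij]
      · by_cases hl' : l = j
        · subst hl'
          rw [hej]
          apply Finset.eq_of_subset_of_card_le
          · intro y hy
            rw [Finset.mem_image] at hy
            obtain ⟨x, hx, rfl⟩ := hy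
            have hv := h2 x hx
            have hx' := (aux_mem_I hI).1 hx
            rw [aux_mem_I hI, hv]
            omega
          · rw [Finset.card_image_of_injective _ σ.injective,
              aux_card_I hk hoff hI, aux_card_I hk hoff hI, hcij]
        · rw [hel l hl hl']
          calc Finset.image σ (I l) = Finset.image _root_.id (I l) :=
              Finset.image_congr fun x hx =>
                h3 x (aux_disjoint hoff hI hl hx) (aux_disjoint hoff hI hl' hx)
            _ = I l := Finset.image_id
end
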